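/- Let θ be a flow from a to b on a finite connected graph, p>1, that minimizes the energy ℰ(θ) = ∑_{e∈E} r_e^{1/(p-1)}|θ(e)|^{p/(p-1)} among all unit flows. Then θ satisfies the cycle law: along every cycle e_1,...,e_n, ∑_{i=1}^n r_{e_i}^{1/(p-1)} θ(e_i)/|θ(e_i)|^{(p-2)/(p-1)} = 0. -/

import Mathlib

open Finset

lemma sum_sum_ite_adj {V : Type*} [Fintype V] [DecidableEq V]
    (G : SimpleGraph V) [DecidableRel G.Adj] (g : V → V → ℝ) {w z : V} (h : G.Adj w z) :
    ∑ x, ∑ y ∈ G.neighborFinset x, (if x = w ∧ y = z then g x y else 0) = g w z := by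
  rw [Finset.sum_eq_single w]
  · have hz : z ∈ G.neighborFinset w := by
      simpa [SimpleGraph.mem_neighborFinset] using h
    have : ∀ y ∈ G.neighborFinset w,
        (if w = w ∧ y = z then g w y else 0) = (if y = z then g w y else 0) := by
      intro y _; simp
    rw [Finset.sum_congr rfl this, Finset.sum_ite_eq' (G.neighborFinset w) z (g w), if_pos hz]
  · intro x _ hx
    exact Finset.sum_eq_zero fun y _ => by simp [hx]
  · intro h'; exact absurd (Finset.mem_univ w) h'

lemma telescope_fin {n : ℕ} (f : Fin (n + 1) → ℝ) (hc : f (Fin.last n) = f 0) :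
    ∑ i : Fin n, (f i.castSucc - f i.succ) = 0 := by
  rw [Finset.sum_sub_distrib]
  have h1 := Fin.sum_univ_castSucc (f := f)
  have h2 := Fin.sum_univ_succ (f := f)
  have := h1.symm.trans h2
  linarith [this, hc]



/-- A unit flow minimizing the energy ∑_e r_e^{1/(p-1)}|θ(e)|^{p/(p-1)} satisfies the
cycle law. -/
theorem energy_minimizer_satisfies_cycle_law {V : Type*} [Fintype V] [DecidableEq V]
    (G : SimpleGraph V) [DecidableRel G.Adj] (hconn : G.Connected)
    (p : ℝ) (hp : 1 < p)
    (r : V → V → ℝ) (hr_sym : ∀ x y, r x y = r y x)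
    (hr_pos : ∀ x y, G.Adj x y → 0 < r x y)
    (a b : V) (hab : a ≠ b)
    (θ : V → V → ℝ)
    (hanti : ∀ x y, θ x y = -θ y x)
    (hnode : ∀ x, x ≠ a → x ≠ b → ∑ y ∈ G.neighborFinset x, θ x y = 0)
    (hunit : ∑ x ∈ G.neighborFinset a, θ a x = 1)
    (hmin : ∀ η : V → V → ℝ,
      (∀ x y, η x y = -η y x) →
      (∀ x, x ≠ a → x ≠ b → ∑ y ∈ G.neighborFinset x, η x y = 0) →
      (∑ x ∈ G.neighborFinset a, η a x = 1) →
      (1 / 2) * ∑ x, ∑ y ∈ G.neighborFinset x,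
          (r x y) ^ ((1 : ℝ) / (p - 1)) * |θ x y| ^ (p / (p - 1)) ≤
        (1 / 2) * ∑ x, ∑ y ∈ G.neighborFinset x,
          (r x y) ^ ((1 : ℝ) / (p - 1)) * |η x y| ^ (p / (p - 1))) :
    ∀ (n : ℕ) (xs : Fin (n + 1) → V),
      (∀ i : Fin n, G.Adj (xs i.castSucc) (xs i.succ)) →
      xs (Fin.last n) = xs 0 →
      ∑ i : Fin n, (r (xs i.castSucc) (xs i.succ)) ^ ((1 : ℝ) / (p - 1)) *
        (θ (xs i.castSucc) (xs i.succ) /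
          |θ (xs i.castSucc) (xs i.succ)| ^ ((p - 2) / (p - 1))) = 0 := by
  intro n xs hadj hcyc
  have hp1 : (0:ℝ) < p - 1 := by linarith
  set q : ℝ := p / (p - 1) with hq_def
  have hq1 : 1 < q := (one_lt_div hp1).mpr (by linarith)
  -- the cycle flow
  set χ : V → V → ℝ := fun x y => ∑ i : Fin n,
      ((if x = xs i.castSucc ∧ y = xs i.succ then (1:ℝ) else 0)
        - (if x = xs i.succ ∧ y = xs i.castSucc then (1:ℝ) else 0)) with hχ_def
  have hχanti : ∀ x y, χ x y = -χ y x := by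
    intro x y
    rw [hχ_def, ← Finset.sum_neg_distrib]
    refine Finset.sum_congr rfl fun i _ => ?_
    rw [neg_sub]
    congr 1
    · exact if_congr and_comm rfl rfl
    · exact if_congr and_comm rfl rfl
  have hχnode : ∀ x : V, ∑ y ∈ G.neighborFinset x, χ x y = 0 := by
    intro x
    have step : ∑ y ∈ G.neighborFinset x, χ x y
        = ∑ i : Fin n, ((if x = xs i.castSucc then (1:ℝ) else 0)
            - (if x = xs i.succ then (1:ℝ) else 0)) := by
      rw [hχ_def, Finset.sum_comm]
      refine Finset.sum_congr rfl fun i _ => ?_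
      rw [Finset.sum_sub_distrib]
      congr 1
      · by_cases hx : x = xs i.castSucc
        · simp [hx, hadj i]
        · simp [hx]
      · by_cases hx : x = xs i.succ
        · simp [hx, (hadj i).symm]
        · simp [hx]
    rw [step]
    exact telescope_fin (fun j => if x = xs j then (1:ℝ) else 0) (by simp [hcyc])
  -- pairing a double sum against χ
  have hpair : ∀ g : V → V → ℝ,
      ∑ x, ∑ y ∈ G.neighborFinset x, g x y * χ x y
        = ∑ i : Fin n, (g (xs i.castSucc) (xs i.succ) - g (xs i.succ) (xs i.castSucc)) := by
    intro g
    have expand : ∀ x y, g x y * χ x y = ∑ i : Fin n,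
        ((if x = xs i.castSucc ∧ y = xs i.succ then g x y else 0)
          - (if x = xs i.succ ∧ y = xs i.castSucc then g x y else 0)) := by
      intro x y
      rw [hχ_def, Finset.mul_sum]
      refine Finset.sum_congr rfl fun i _ => ?_
      rw [mul_sub, mul_ite, mul_ite, mul_one, mul_zero]
    calc ∑ x, ∑ y ∈ G.neighborFinset x, g x y * χ x y
        = ∑ i : Fin n, ∑ x, ∑ y ∈ G.neighborFinset x,
            ((if x = xs i.castSucc ∧ y = xs i.succ then g x y else 0)
              - (if x = xs i.succ ∧ y = xs i.castSucc then g x y else 0)) := by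
          simp_rw [expand]
          rw [Finset.sum_comm]
          refine Finset.sum_congr rfl fun i _ => ?_
          rw [Finset.sum_comm]
      _ = ∑ i : Fin n, (g (xs i.castSucc) (xs i.succ) - g (xs i.succ) (xs i.castSucc)) := by
          refine Finset.sum_congr rfl fun i _ => ?_
          rw [show (∑ x, ∑ y ∈ G.neighborFinset x,
              ((if x = xs i.castSucc ∧ y = xs i.succ then g x y else 0)
                - (if x = xs i.succ ∧ y = xs i.castSucc then g x y else 0)))
            = (∑ x, ∑ y ∈ G.neighborFinset x,
                (if x = xs i.castSucc ∧ y = xs i.succ then g x y else 0))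
              - ∑ x, ∑ y ∈ G.neighborFinset x,
                (if x = xs i.succ ∧ y = xs i.castSucc then g x y else 0) by
              rw [← Finset.sum_sub_distrib]
              exact Finset.sum_congr rfl fun x _ => by rw [Finset.sum_sub_distrib]]
          rw [sum_sum_ite_adj G g (hadj i), sum_sum_ite_adj G g (hadj i).symm]
  -- the energy functional along the perturbation
  set F : ℝ → ℝ := fun ε => (1 / 2) * ∑ x, ∑ y ∈ G.neighborFinset x,
      (r x y) ^ ((1 : ℝ) / (p - 1)) * |θ x y + ε * χ x y| ^ q with hF_def
  have hle : ∀ ε : ℝ, F 0 ≤ F ε := by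
    intro ε
    have hηanti : ∀ x y, θ x y + ε * χ x y = -(θ y x + ε * χ y x) := by
      intro x y; rw [hanti x y, hχanti x y]; ring
    have hηnode : ∀ x, x ≠ a → x ≠ b →
        ∑ y ∈ G.neighborFinset x, (θ x y + ε * χ x y) = 0 := by
      intro x hxa hxb
      rw [Finset.sum_add_distrib, hnode x hxa hxb, ← Finset.mul_sum, hχnode x]
      ring
    have hηunit : ∑ y ∈ G.neighborFinset a, (θ a y + ε * χ a y) = 1 := by
      rw [Finset.sum_add_distrib, hunit, ← Finset.mul_sum, hχnode a]
      ring
    have h := hmin (fun x y => θ x y + ε * χ x y) hηanti hηnode hηunit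
    simpa [hF_def, hq_def] using h
  have hlocal : IsLocalMin F 0 := Filter.Eventually.of_forall hle
  -- derivative of F at 0
  set D : ℝ := (1 / 2) * ∑ x, ∑ y ∈ G.neighborFinset x,
      (r x y) ^ ((1 : ℝ) / (p - 1)) * (q * |θ x y| ^ (q - 2) * θ x y * χ x y) with hD_def
  have hF : HasDerivAt F D 0 := by
    rw [hF_def, hD_def]
    apply HasDerivAt.const_mul
    apply HasDerivAt.fun_sum
    intro x _
    apply HasDerivAt.fun_sum
    intro y _
    apply HasDerivAt.const_mul
    have haff : HasDerivAt (fun ε : ℝ => θ x y + ε * χ x y) (χ x y) 0 := by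
      simpa using ((hasDerivAt_id (0:ℝ)).mul_const (χ x y)).const_add (θ x y)
    have hcomp := (hasDerivAt_abs_rpow (θ x y + 0 * χ x y) hq1).comp 0 haff
    simpa [Function.comp_def] using hcomp
  have hD0 : D = 0 := hlocal.hasDerivAt_eq_zero hF
  -- rewrite D using the pairing lemma
  set g : V → V → ℝ := fun x y =>
      (r x y) ^ ((1 : ℝ) / (p - 1)) * (θ x y * |θ x y| ^ (q - 2)) with hg_def
  have hDg : D = q * ∑ i : Fin n, g (xs i.castSucc) (xs i.succ) := by
    rw [hD_def]
    have : ∀ x y, (r x y) ^ ((1 : ℝ) / (p - 1)) * (q * |θ x y| ^ (q - 2) * θ x y * χ x y)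
        = q * (g x y * χ x y) := by
      intro x y; rw [hg_def]; ring
    simp_rw [this, ← Finset.mul_sum]
    rw [hpair g]
    have hgan : ∀ i : Fin n, g (xs i.castSucc) (xs i.succ) - g (xs i.succ) (xs i.castSucc)
        = 2 * g (xs i.castSucc) (xs i.succ) := by
      intro i
      have h1 : g (xs i.succ) (xs i.castSucc) = -g (xs i.castSucc) (xs i.succ) := by
        rw [hg_def]
        simp only []
        rw [hr_sym (xs i.succ) (xs i.castSucc), hanti (xs i.succ) (xs i.castSucc), abs_neg]
        ring
      rw [h1]; ring
    rw [Finset.sum_congr rfl fun i _ => hgan i, ← Finset.mul_sum]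
    ring
  have hqne : q ≠ 0 := by positivity
  have hsum0 : ∑ i : Fin n, g (xs i.castSucc) (xs i.succ) = 0 := by
    have := hDg.symm.trans hD0
    exact (mul_eq_zero.mp this).resolve_left hqne
  -- finally identify the goal sum with ∑ g
  have hterm : ∀ i : Fin n,
      (r (xs i.castSucc) (xs i.succ)) ^ ((1 : ℝ) / (p - 1)) *
        (θ (xs i.castSucc) (xs i.succ) /
          |θ (xs i.castSucc) (xs i.succ)| ^ ((p - 2) / (p - 1)))
      = g (xs i.castSucc) (xs i.succ) := by
    intro i
    rw [hg_def]
    congr 1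
    set t := θ (xs i.castSucc) (xs i.succ)
    by_cases ht : t = 0
    · simp [ht]
    · have habs : (0:ℝ) < |t| := abs_pos.mpr ht
      have hexp : q - 2 = -((p - 2) / (p - 1)) := by
        rw [hq_def]; field_simp; ring
      rw [hexp, Real.rpow_neg (abs_nonneg t), div_eq_mul_inv]
  rw [Finset.sum_congr rfl fun i _ => hterm i]
  exact hsum0
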